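/- For all real numbers β₁, β₂, β₃ and all λ ∈ ℝ, the characteristic polynomial of the matrix Φ₀ factors as det(Φ₀ − λ I₄) = (λ − λ₁)(λ − λ₂)(λ − λ₃)(λ − λ₄), where λ₁ = β₁ + 2β₂ + β₂β₃, λ₂ = 1 + β₂ − β₂β₃, λ₃ = β₁ + β₂β₃, λ₄ = 1 − β₂ − β₂β₃. -/

import Mathlib

open Matrix

def Phi0 (β₁ β₂ β₃ : ℝ) : Matrix (Fin 4) (Fin 4) ℝ :=
  !![1, 0, β₂, β₁ + β₂ + β₂ * β₃ - 1;
     0, 1, β₁ + β₂ + β₂ * β₃ - 1, β₂;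
     β₂, β₂ * β₃, β₁ + β₂, 0;
     β₂ * β₃, β₂, 0, β₁ + β₂]

set_option maxHeartbeats 2000000 in
theorem Phi0_charpoly_factors (β₁ β₂ β₃ l : ℝ) :
    (Phi0 β₁ β₂ β₃ - l • (1 : Matrix (Fin 4) (Fin 4) ℝ)).det =
      (l - (β₁ + 2 * β₂ + β₂ * β₃)) * (l - (1 + β₂ - β₂ * β₃)) *
      (l - (β₁ + β₂ * β₃)) * (l - (1 - β₂ - β₂ * β₃)) := by
  have h : Phi0 β₁ β₂ β₃ - l • (1 : Matrix (Fin 4) (Fin 4) ℝ) =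
      !![1 - l, 0, β₂, β₁ + β₂ + β₂ * β₃ - 1;
         0, 1 - l, β₁ + β₂ + β₂ * β₃ - 1, β₂;
         β₂, β₂ * β₃, β₁ + β₂ - l, 0;
         β₂ * β₃, β₂, 0, β₁ + β₂ - l] := by
    ext i j
    fin_cases i <;> fin_cases j <;>
      simp [Phi0, Matrix.sub_apply, Matrix.smul_apply, Matrix.one_apply]
  rw [h]
  simp [Matrix.det_succ_row_zero, Fin.sum_univ_succ, Fin.succAbove, show ((2:Fin 3).castSucc : Fin 4) = 2 from rfl]
  ring
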